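/- For any two pairings π₁, π₂ of a finite set I, the number of blocks of the join π₁ ∨ π₂ (in the partition lattice) equals half the number of cycles of the permutation π₁π₂ (where each pairing is viewed as an involution without fixed points). -/

import Mathlib

/-- The number of cycles (orbits, including fixed points) of a permutation. -/
noncomputable def cycleCount {I : Type*} (σ : Equiv.Perm I) : ℕ :=
  Nat.card (MulAction.orbitRel.Quotient (Subgroup.zpowers σ) I)

/-- The number of blocks of the join `Π(π₁) ∨ Π(π₂)` of the orbit partitions,
i.e. the number of orbits of the subgroup generated by `π₁` and `π₂`. -/
noncomputable def jointOrbitCount {I : Type*} (π₁ π₂ : Equiv.Perm I) : ℕ :=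
  Nat.card (MulAction.orbitRel.Quotient
    (Subgroup.closure {π₁, π₂} : Subgroup (Equiv.Perm I)) I)

/-- A pairing of `I`: a fixed-point-free involution. -/
def IsPairing {I : Type*} (π : Equiv.Perm I) : Prop :=
  π * π = 1 ∧ ∀ x, π x ≠ x

theorem stmt0 {I : Type*} [Fintype I] (π₁ π₂ : Equiv.Perm I)
    (h₁ : IsPairing π₁) (h₂ : IsPairing π₂) :
    2 * jointOrbitCount π₁ π₂ = cycleCount (π₁ * π₂) := by
  classical
  obtain ⟨h1sq, h1fp⟩ := h₁
  obtain ⟨h2sq, h2fp⟩ := h₂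
  set σ : Equiv.Perm I := π₁ * π₂ with hσ
  have h1inv : π₁⁻¹ = π₁ := by rw [inv_eq_iff_mul_eq_one, h1sq]
  have h2inv : π₂⁻¹ = π₂ := by rw [inv_eq_iff_mul_eq_one, h2sq]
  have hconj : π₁ * σ * π₁⁻¹ = σ⁻¹ := by
    rw [hσ, h1inv, mul_inv_rev, h1inv, h2inv]
    calc π₁ * (π₁ * π₂) * π₁ = (π₁ * π₁) * π₂ * π₁ := by group
      _ = π₂ * π₁ := by rw [h1sq, one_mul]
  have hconjk : ∀ k : ℤ, π₁ * σ ^ k = σ ^ (-k) * π₁ := by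
    intro k
    have h := conj_zpow (i := k) (a := π₁) (b := σ)
    rw [hconj, inv_zpow'] at h
    calc π₁ * σ ^ k = (π₁ * σ ^ k * π₁⁻¹) * π₁ := by group
      _ = σ ^ (-k) * π₁ := by rw [← h]
  have hcomp : ∀ (a b : ℤ) (x : I), (σ ^ a) ((σ ^ b) x) = (σ ^ (a + b)) x := by
    intro a b x; rw [← Equiv.Perm.mul_apply, ← zpow_add]
  have hpt : ∀ (k : ℤ) (x : I), π₁ ((σ ^ k) x) = (σ ^ (-k)) (π₁ x) := by
    intro k x
    rw [← Equiv.Perm.mul_apply, hconjk k, Equiv.Perm.mul_apply]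
  have hπ2eq : π₁ * σ = π₂ := by rw [hσ, ← mul_assoc, h1sq, one_mul]
  have hπ2app : ∀ y : I, π₂ y = π₁ (σ y) := by
    intro y; rw [← Equiv.Perm.mul_apply, hπ2eq]
  -- key: π₁ x is never in the σ-orbit of x
  have hneq : ∀ (x : I) (k : ℤ), π₁ x ≠ (σ ^ k) x := by
    intro x k hk
    rcases Int.even_or_odd k with ⟨m, hm⟩ | ⟨m, hm⟩
    · apply h1fp ((σ ^ m) x)
      rw [hpt, hk, hcomp, hm, show -m + (m + m) = m by ring]
    · apply h2fp ((σ ^ m) x)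
      have e1 : σ ((σ ^ m) x) = (σ ^ (1 + m)) x := by
        have := hcomp 1 m x; rwa [zpow_one] at this
      rw [hπ2app, e1, hpt, hk, hcomp, hm, show -(1 + m) + (2 * m + 1) = m by ring]
  -- structure of the closure
  have struct : ∀ g ∈ Subgroup.closure ({π₁, π₂} : Set (Equiv.Perm I)),
      (∃ k : ℤ, g = σ ^ k) ∨ (∃ k : ℤ, g = σ ^ k * π₁) := by
    intro g hg
    induction hg using Subgroup.closure_induction with
    | mem x hx =>
      rcases hx with h | h
      · exact Or.inr ⟨0, by rw [h, zpow_zero, one_mul]⟩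
      · refine Or.inr ⟨-1, ?_⟩
        have hi : σ⁻¹ * π₁ = π₂ := by
          rw [hσ, mul_inv_rev, h1inv, h2inv, mul_assoc, h1sq, mul_one]
        rw [h, zpow_neg_one, hi]
    | one => exact Or.inl ⟨0, by simp⟩
    | mul x y hx hy ihx ihy =>
      rcases ihx with ⟨a, rfl⟩ | ⟨a, rfl⟩ <;> rcases ihy with ⟨b, rfl⟩ | ⟨b, rfl⟩
      · exact Or.inl ⟨a + b, by rw [zpow_add]⟩
      · exact Or.inr ⟨a + b, by rw [zpow_add, mul_assoc]⟩
      · refine Or.inr ⟨a + (-b), ?_⟩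
        rw [mul_assoc, hconjk b, zpow_add, mul_assoc]
      · refine Or.inl ⟨a + (-b), ?_⟩
        rw [zpow_add]
        calc σ ^ a * π₁ * (σ ^ b * π₁) = σ ^ a * (π₁ * σ ^ b) * π₁ := by group
          _ = σ ^ a * (σ ^ (-b) * π₁) * π₁ := by rw [hconjk b]
          _ = σ ^ a * σ ^ (-b) * (π₁ * π₁) := by group
          _ = σ ^ a * σ ^ (-b) := by rw [h1sq, mul_one]
    | inv x hx ihx =>
      rcases ihx with ⟨a, rfl⟩ | ⟨a, rfl⟩
      · exact Or.inl ⟨-a, by simp⟩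
      · refine Or.inr ⟨a, ?_⟩
        rw [mul_inv_rev, h1inv, ← zpow_neg, hconjk, neg_neg]
  -- setup subgroups
  set H := Subgroup.closure ({π₁, π₂} : Set (Equiv.Perm I)) with hH
  set G := Subgroup.zpowers σ with hG
  have hπ1H : π₁ ∈ H := Subgroup.subset_closure (by simp)
  have hπ2H : π₂ ∈ H := Subgroup.subset_closure (by simp)
  have hσH : σ ∈ H := by rw [hσ]; exact mul_mem hπ1H hπ2H
  have hGH : G ≤ H := by rw [hG]; exact Subgroup.zpowers_le.mpr hσH
  -- the natural surjection between orbit quotients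
  let f : MulAction.orbitRel.Quotient G I → MulAction.orbitRel.Quotient H I :=
    Quotient.map' id (fun a b hab => by
      rw [MulAction.orbitRel_apply] at hab ⊢
      obtain ⟨g, hg⟩ := hab
      exact ⟨⟨(g : Equiv.Perm I), hGH g.2⟩, hg⟩)
  have hf : ∀ y : I, f (Quotient.mk'' y) = Quotient.mk'' y := fun y => rfl
  haveI : Fintype (MulAction.orbitRel.Quotient G I) := Fintype.ofFinite _
  haveI : Fintype (MulAction.orbitRel.Quotient H I) := Fintype.ofFinite _
  have hfiber : ∀ j : MulAction.orbitRel.Quotient H I,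
      (Finset.univ.filter fun q => f q = j).card = 2 := by
    intro j
    induction j using Quotient.inductionOn' with
    | h x =>
      rw [Finset.card_eq_two]
      refine ⟨Quotient.mk'' x, Quotient.mk'' (π₁ x), ?_, ?_⟩
      · intro hcontra
        rw [Quotient.eq'', MulAction.orbitRel_apply, MulAction.mem_orbit_iff] at hcontra
        obtain ⟨⟨g, k, hk⟩, hgx⟩ := hcontra
        subst hk
        have : π₁ x = (σ ^ (-k)) x := by
          have hgx' : (σ ^ k) (π₁ x) = x := hgx
          have h2 : (σ ^ (-k)) ((σ ^ k) (π₁ x)) = (σ ^ (-k)) x := by rw [hgx']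
          rwa [hcomp, neg_add_cancel, zpow_zero, Equiv.Perm.one_apply] at h2
        exact hneq x (-k) this
      · ext q
        simp only [Finset.mem_filter, Finset.mem_univ, true_and, Finset.mem_insert,
          Finset.mem_singleton]
        constructor
        · induction q using Quotient.inductionOn' with
          | h y =>
            intro hq
            rw [hf, Quotient.eq'', MulAction.orbitRel_apply, MulAction.mem_orbit_iff] at hq
            obtain ⟨⟨g, hgH⟩, hgx⟩ := hq
            simp only [Subgroup.mk_smul, Equiv.Perm.smul_def] at hgx
            rcases struct g hgH with ⟨k, rfl⟩ | ⟨k, rfl⟩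
            · left
              rw [Quotient.eq'', MulAction.orbitRel_apply, MulAction.mem_orbit_iff]
              exact ⟨⟨σ ^ k, k, rfl⟩, hgx⟩
            · right
              rw [Quotient.eq'', MulAction.orbitRel_apply, MulAction.mem_orbit_iff]
              refine ⟨⟨σ ^ k, k, rfl⟩, ?_⟩
              exact (by simpa [Equiv.Perm.mul_apply] using hgx : (σ ^ k) (π₁ x) = y)
        · rintro (rfl | rfl)
          · exact hf x
          · rw [hf, Quotient.eq'', MulAction.orbitRel_apply, MulAction.mem_orbit_iff]
            exact ⟨⟨π₁, hπ1H⟩, rfl⟩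
  have hsum : (Finset.univ : Finset (MulAction.orbitRel.Quotient G I)).card
      = ∑ j : MulAction.orbitRel.Quotient H I,
        (Finset.univ.filter fun q => f q = j).card :=
    Finset.card_eq_sum_card_fiberwise (fun x _ => Finset.mem_univ _)
  have key : Nat.card (MulAction.orbitRel.Quotient G I)
      = 2 * Nat.card (MulAction.orbitRel.Quotient H I) := by
    rw [Nat.card_eq_fintype_card, Nat.card_eq_fintype_card, ← Finset.card_univ, hsum]
    simp [hfiber, mul_comm]
  rw [jointOrbitCount, cycleCount]
  exact key.symm
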